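/- Let V(x) = K(exp(r_+(β)x) - exp(r_-(β)x)) on [0, x₁] with K > 0, where r_+(β) > 0 > r_-(β) are the roots of (σ²β²/2)r² + (βμ - δ)r - γ = 0, and suppose V''(x₁) = 0. Then V''' > 0 on [0, x₁), hence V'' < 0 and V' > V'(x₁) on [0, x₁); in particular V is strictly concave and strictly increasing on [0, x₁]. -/

import Mathlib

open Real

lemma aux_hasDerivAt (a b c d x : ℝ) :
    HasDerivAt (fun x => a * Real.exp (c * x) - b * Real.exp (d * x))
      (a * c * Real.exp (c * x) - b * d * Real.exp (d * x)) x := by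
  have h1 : HasDerivAt (fun x => a * Real.exp (c * x)) (a * c * Real.exp (c * x)) x := by
    have : HasDerivAt (fun y => a * Real.exp (c * id y)) (a * (Real.exp (c * x) * (c * 1))) x :=
      (((hasDerivAt_id x).const_mul c).exp).const_mul a
    convert this using 1; simp; ring
  have h2 : HasDerivAt (fun x => b * Real.exp (d * x)) (b * d * Real.exp (d * x)) x := by
    have : HasDerivAt (fun y => b * Real.exp (d * id y)) (b * (Real.exp (d * x) * (d * 1))) x :=
      (((hasDerivAt_id x).const_mul d).exp).const_mul b
    convert this using 1; simp; ring
  exact h1.sub h2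

lemma aux_deriv (a b c d : ℝ) :
    deriv (fun x => a * Real.exp (c * x) - b * Real.exp (d * x))
      = fun x => a * c * Real.exp (c * x) - b * d * Real.exp (d * x) := by
  funext x
  exact (aux_hasDerivAt a b c d x).deriv

/-- For `V(x) = K(exp(r₊(β)x) - exp(r₋(β)x))` with `K > 0`, if
`V''(x₁) = 0` then `V''' > 0` on `[0, x₁)`, hence `V'' < 0` and `V' > V'(x₁)` on
`[0, x₁)`; in particular `V` is strictly concave and strictly increasing on
`[0, x₁]`. -/
theorem stmt_18 (μ σ γ δ β K x₁ : ℝ) (hμ : 0 < μ) (hσ : 0 < σ) (hγ : 0 < γ)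
    (hδ : 0 ≤ δ) (hβ : 0 < β) (hK : 0 < K) (hx₁ : 0 < x₁)
    (rp rm : ℝ)
    (hrp : rp = (-(β * μ - δ) + Real.sqrt ((β * μ - δ) ^ 2 + 2 * σ ^ 2 * β ^ 2 * γ)) / (σ ^ 2 * β ^ 2))
    (hrm : rm = (-(β * μ - δ) - Real.sqrt ((β * μ - δ) ^ 2 + 2 * σ ^ 2 * β ^ 2 * γ)) / (σ ^ 2 * β ^ 2))
    (V : ℝ → ℝ) (hV : ∀ x, V x = K * (Real.exp (rp * x) - Real.exp (rm * x)))
    (hV'' : deriv (deriv V) x₁ = 0) :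
    (∀ x ∈ Set.Ico (0 : ℝ) x₁, 0 < deriv (deriv (deriv V)) x) ∧
    (∀ x ∈ Set.Ico (0 : ℝ) x₁, deriv (deriv V) x < 0) ∧
    (∀ x ∈ Set.Ico (0 : ℝ) x₁, deriv V x > deriv V x₁) ∧
    StrictConcaveOn ℝ (Set.Icc (0 : ℝ) x₁) V ∧
    StrictMonoOn V (Set.Icc (0 : ℝ) x₁) := by
  set a := β * μ - δ with ha
  have hden : 0 < σ ^ 2 * β ^ 2 := by positivity
  have hs : |a| < Real.sqrt (a ^ 2 + 2 * σ ^ 2 * β ^ 2 * γ) := by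
    rw [← Real.sqrt_sq_eq_abs]
    refine Real.sqrt_lt_sqrt (sq_nonneg a) ?_
    have : 0 < 2 * σ ^ 2 * β ^ 2 * γ := by positivity
    linarith
  have hrp0 : 0 < rp := by
    rw [hrp]
    apply div_pos _ hden
    have : a ≤ |a| := le_abs_self a
    linarith [hs]
  have hrm0 : rm < 0 := by
    rw [hrm]
    apply div_neg_of_neg_of_pos _ hden
    have : -a ≤ |a| := neg_le_abs a
    linarith [hs]
  -- rewrite V as explicit function
  have hVfun : V = fun x => K * Real.exp (rp * x) - K * Real.exp (rm * x) := by
    funext x; rw [hV x]; ring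
  have hd1 : deriv V = fun x => K * rp * Real.exp (rp * x) - K * rm * Real.exp (rm * x) := by
    rw [hVfun]; exact aux_deriv K K rp rm
  have hd2 : deriv (deriv V)
      = fun x => K * rp * rp * Real.exp (rp * x) - K * rm * rm * Real.exp (rm * x) := by
    rw [hd1, aux_deriv]
  have hd3 : deriv (deriv (deriv V))
      = fun x => K * rp * rp * rp * Real.exp (rp * x) - K * rm * rm * rm * Real.exp (rm * x) := by
    rw [hd2, aux_deriv]
  -- V''' > 0 everywhere
  have h3pos : ∀ x : ℝ, 0 < deriv (deriv (deriv V)) x := by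
    intro x
    rw [hd3]
    have h1 : 0 < K * rp * rp * rp * Real.exp (rp * x) := by positivity
    have h2 : K * rm * rm * rm * Real.exp (rm * x) < 0 := by
      have : K * rm * rm * rm < 0 := by nlinarith [mul_pos hK (mul_pos (neg_pos.mpr hrm0) (neg_pos.mpr hrm0))]
      exact mul_neg_of_neg_of_pos this (Real.exp_pos _)
    simp only
    linarith
  -- V'' strictly monotone
  have h2mono : StrictMono (deriv (deriv V)) := by
    apply strictMono_of_deriv_pos h3pos
  have h2neg : ∀ x ∈ Set.Ico (0 : ℝ) x₁, deriv (deriv V) x < 0 := by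
    intro x hx
    have := h2mono hx.2
    rwa [hV''] at this
  -- V' > 0 everywhere
  have h1pos : ∀ x : ℝ, 0 < deriv V x := by
    intro x
    rw [hd1]
    have h1 : 0 < K * rp * Real.exp (rp * x) := by positivity
    have h2 : K * rm * Real.exp (rm * x) < 0 := by
      have : K * rm < 0 := mul_neg_of_pos_of_neg hK hrm0
      exact mul_neg_of_neg_of_pos this (Real.exp_pos _)
    simp only
    linarith
  -- V' continuous (differentiable everywhere)
  have hd1diff : Differentiable ℝ (deriv V) := by
    rw [hd1]
    intro x
    exact (aux_hasDerivAt (K*rp) (K*rm) rp rm x).differentiableAt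
  have hVdiff : Differentiable ℝ V := by
    rw [hVfun]
    intro x
    exact (aux_hasDerivAt K K rp rm x).differentiableAt
  have h1anti : StrictAntiOn (deriv V) (Set.Icc (0 : ℝ) x₁) := by
    apply strictAntiOn_of_deriv_neg (convex_Icc _ _) (hd1diff.continuous.continuousOn)
    intro x hx
    rw [interior_Icc] at hx
    exact h2neg x ⟨le_of_lt hx.1, hx.2⟩
  refine ⟨fun x _ => h3pos x, h2neg, ?_, ?_, ?_⟩
  · intro x hx
    exact h1anti ⟨hx.1, le_of_lt hx.2⟩ ⟨le_of_lt hx₁, le_refl _⟩ hx.2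
  · apply strictConcaveOn_of_deriv2_neg (convex_Icc _ _) (hVdiff.continuous.continuousOn)
    intro x hx
    rw [interior_Icc] at hx
    have := h2neg x ⟨le_of_lt hx.1, hx.2⟩
    exact this
  · apply strictMonoOn_of_deriv_pos (convex_Icc _ _) (hVdiff.continuous.continuousOn)
    intro x _
    exact h1pos x
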